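/- Let H be a complex Hilbert space and B : H × H → ℂ a sesquilinear form (linear in the first variable, conjugate-linear in the second) such that B(v,v) is real and nonnegative for every v ∈ H. If the function H → ℝ, v ↦ B(v,v), is lower semicontinuous with respect to the norm topology of H, then B is bounded; more precisely, there exists a unique positive bounded operator T on H such that B(v,w) = ⟨T v, w⟩ for all v, w ∈ H. -/

import Mathlib

open scoped InnerProductSpace ComplexConjugate

/-- A sesquilinear form (linear in the first variable, conjugate-linear in the second)
on a complex Hilbert space whose quadratic part is real, nonnegative and lower
semicontinuous is represented by a unique positive bounded operator. -/
theorem lsc_positive_sesquilinear_form_is_bounded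
    {H : Type*} [NormedAddCommGroup H] [InnerProductSpace ℂ H] [CompleteSpace H]
    (B : H → H → ℂ)
    (hadd₁ : ∀ v v' w : H, B (v + v') w = B v w + B v' w)
    (hsmul₁ : ∀ (c : ℂ) (v w : H), B (c • v) w = c * B v w)
    (hadd₂ : ∀ v w w' : H, B v (w + w') = B v w + B v w')
    (hsmul₂ : ∀ (c : ℂ) (v w : H), B v (c • w) = conj c * B v w)
    (hreal : ∀ v : H, (B v v).im = 0)
    (hpos : ∀ v : H, 0 ≤ (B v v).re)
    (hlsc : LowerSemicontinuous fun v : H => (B v v).re) :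
    ∃! T : H →L[ℂ] H, T.IsPositive ∧ ∀ v w : H, B v w = ⟪w, T v⟫_ℂ := by
  -- expansion of the quadratic part
  have expand : ∀ (t : ℂ) (v w : H), B (v + t • w) (v + t • w)
      = B v v + conj t * B v w + t * B w v + (t * conj t) * B w w := by
    intro t v w
    simp only [hadd₁, hadd₂, hsmul₁, hsmul₂]
    ring
  -- Hermitian symmetry
  have hsymm : ∀ v w : H, B w v = conj (B v w) := by
    intro v w
    have h1 := hreal (v + (1 : ℂ) • w)
    have h2 := hreal (v + Complex.I • w)
    rw [expand] at h1 h2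
    simp only [map_one, Complex.conj_I, one_mul, mul_one] at h1 h2
    -- h1 : (B v v + B v w + B w v + B w w).im = 0
    -- h2 : (B v v + (-I) * B v w + I * B w v + (I * -I) * B w w).im = 0
    simp only [Complex.add_im, Complex.mul_im, Complex.neg_re, Complex.neg_im,
      Complex.I_re, Complex.I_im, hreal] at h1 h2
    apply Complex.ext <;> simp only [Complex.conj_re, Complex.conj_im] <;> linarith
  have hB0 : ∀ w : H, B 0 w = 0 := by
    intro w
    have := hsmul₁ 0 0 w
    simpa using this
  -- quadratic part
  set q : H → ℝ := fun v => (B v v).re with hq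
  have hq_smul : ∀ (c : ℂ) (v : H), q (c • v) = Complex.normSq c * q v := by
    intro c v
    have : B (c • v) (c • v) = (c * conj c) * B v v := by
      rw [hsmul₁, hsmul₂]; ring
    simp only [hq, this, Complex.mul_conj, Complex.ofReal_mul]
    simp [Complex.ofReal_re, Complex.ofReal_im, Complex.mul_re, hreal]
  -- Baire category: q is bounded on a ball
  obtain ⟨n, x₀, ε, hε, hball⟩ : ∃ (n : ℕ) (x₀ : H) (ε : ℝ), 0 < ε ∧
      ∀ y ∈ Metric.ball x₀ ε, q y ≤ n := by
    have hclosed : ∀ n : ℕ, IsClosed {v : H | q v ≤ n} := fun n => hlsc.isClosed_preimage n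
    have hcover : ⋃ n : ℕ, {v : H | q v ≤ n} = Set.univ := by
      ext v
      simp only [Set.mem_iUnion, Set.mem_setOf_eq, Set.mem_univ, iff_true]
      exact ⟨⌈q v⌉₊, Nat.le_ceil _⟩
    obtain ⟨n, x₀, hx₀⟩ := nonempty_interior_of_iUnion_of_closed hclosed hcover
    rw [mem_interior_iff_mem_nhds, Metric.mem_nhds_iff] at hx₀
    obtain ⟨ε, hε, hsub⟩ := hx₀
    exact ⟨n, x₀, ε, hε, fun y hy => hsub hy⟩
  -- parallelogram trick: q bounded near 0
  have hsmall : ∀ y : H, ‖y‖ < ε → q y ≤ n := by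
    intro y hy
    have hmp : (x₀ + y) ∈ Metric.ball x₀ ε := by
      simp only [Metric.mem_ball, dist_eq_norm, add_sub_cancel_left]
      exact hy
    have hmm : (x₀ + (-1 : ℂ) • y) ∈ Metric.ball x₀ ε := by
      simp only [Metric.mem_ball, dist_eq_norm, add_sub_cancel_left, neg_one_smul, norm_neg]
      exact hy
    have hp1 : q (x₀ + y) ≤ n := hball _ hmp
    have hm1 : q (x₀ + (-1 : ℂ) • y) ≤ n := hball _ hmm
    have hpar : q (x₀ + (1 : ℂ) • y) + q (x₀ + (-1 : ℂ) • y) = 2 * q x₀ + 2 * q y := by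
      have e1 := expand 1 x₀ y
      have e2 := expand (-1) x₀ y
      have : B (x₀ + (1:ℂ) • y) (x₀ + (1:ℂ) • y) + B (x₀ + (-1:ℂ) • y) (x₀ + (-1:ℂ) • y)
          = 2 * B x₀ x₀ + 2 * B y y := by
        rw [e1, e2]; simp only [map_one, map_neg]; ring
      have := congrArg Complex.re this
      simpa [hq, Complex.add_re, Complex.mul_re, hreal] using this
    have : q y = (q (x₀ + (1:ℂ) • y) + q (x₀ + (-1:ℂ) • y)) / 2 - q x₀ := by linarith
    have hx₀pos : 0 ≤ q x₀ := hpos x₀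
    have hp1' : q (x₀ + (1 : ℂ) • y) ≤ n := by simpa using hp1
    linarith
  -- quadratic bound
  set C : ℝ := 4 * n / (ε * ε) with hC
  have hCpos : 0 ≤ C := by positivity
  have hqbound : ∀ v : H, q v ≤ C * ‖v‖ ^ 2 := by
    intro v
    rcases eq_or_ne v 0 with rfl | hv
    · have h0 : q 0 = 0 := by simp [hq, hB0]
      rw [h0]; positivity
    · have hnv : 0 < ‖v‖ := norm_pos_iff.mpr hv
      set c : ℂ := ((ε / (2 * ‖v‖) : ℝ) : ℂ) with hc
      have hcn : ‖c • v‖ = ε / 2 := by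
        rw [norm_smul]
        simp only [hc, Complex.norm_real, Real.norm_eq_abs]
        rw [abs_of_pos (by positivity)]
        field_simp
      have h1 : q (c • v) ≤ n := hsmall _ (by rw [hcn]; linarith)
      have h2 : q (c • v) = (ε / (2 * ‖v‖))^2 * q v := by
        rw [hq_smul, hc, Complex.normSq_ofReal]
        ring
      have h3 : (ε / (2 * ‖v‖))^2 * q v ≤ n := by rw [← h2]; exact h1
      rw [div_pow] at h3
      have h4 : q v * ε^2 ≤ n * (2 * ‖v‖)^2 := by
        rw [div_mul_eq_mul_div, div_le_iff₀ (by positivity)] at h3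
        linarith [h3]
      rw [hC]
      rw [div_mul_eq_mul_div, le_div_iff₀ (by positivity)]
      nlinarith [h4]
  -- B v v as a real number
  have hBreal : ∀ v : H, B v v = (q v : ℂ) := by
    intro v
    apply Complex.ext
    · simp [hq]
    · simp [hreal v]
  -- polarization bound
  have habs : ∀ v w : H, ‖v‖ ≤ 1 → ‖w‖ ≤ 1 → ‖B v w‖ ≤ 4 * C := by
    intro v w hv hw
    have hpolar : B v w = (B (v + (1:ℂ) • w) (v + (1:ℂ) • w)
        - B (v + (-1:ℂ) • w) (v + (-1:ℂ) • w)
        + Complex.I * B (v + Complex.I • w) (v + Complex.I • w)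
        - Complex.I * B (v + (-Complex.I) • w) (v + (-Complex.I) • w)) / 4 := by
      rw [expand, expand, expand, expand]
      simp only [map_one, map_neg, Complex.conj_I]
      ring_nf
      simp [Complex.I_sq]
      ring
    have hQ : ∀ (t : ℂ), ‖t‖ = 1 → ‖B (v + t • w) (v + t • w)‖ ≤ 4 * C := by
      intro t ht
      rw [hBreal]
      rw [Complex.norm_real, Real.norm_eq_abs, abs_of_nonneg (hpos _)]
      calc q (v + t • w) ≤ C * ‖v + t • w‖ ^ 2 := hqbound _
        _ ≤ C * 2 ^ 2 := by
            apply mul_le_mul_of_nonneg_left _ hCpos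
            apply pow_le_pow_left₀ (norm_nonneg _)
            calc ‖v + t • w‖ ≤ ‖v‖ + ‖t • w‖ := norm_add_le _ _
              _ ≤ 1 + 1 := by
                  apply add_le_add hv
                  rw [norm_smul, ht, one_mul]; exact hw
              _ = 2 := by norm_num
        _ = 4 * C := by ring
    have e1 := hQ 1 (by simp)
    have e2 := hQ (-1) (by simp)
    have e3 := hQ Complex.I (by simp)
    have e4 := hQ (-Complex.I) (by simp)
    set A1 := B (v + (1:ℂ) • w) (v + (1:ℂ) • w)
    set A2 := B (v + (-1:ℂ) • w) (v + (-1:ℂ) • w)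
    set A3 := B (v + Complex.I • w) (v + Complex.I • w)
    set A4 := B (v + (-Complex.I) • w) (v + (-Complex.I) • w)
    rw [hpolar]
    have key : ‖A1 - A2 + Complex.I * A3 - Complex.I * A4‖
        ≤ ‖A1‖ + ‖A2‖ + ‖A3‖ + ‖A4‖ := by
      calc ‖A1 - A2 + Complex.I * A3 - Complex.I * A4‖
          ≤ ‖A1 - A2 + Complex.I * A3‖ + ‖Complex.I * A4‖ := norm_sub_le _ _
        _ ≤ ‖A1 - A2‖ + ‖Complex.I * A3‖ + ‖Complex.I * A4‖ := by
            linarith [norm_add_le (A1 - A2) (Complex.I * A3)]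
        _ ≤ ‖A1‖ + ‖A2‖ + ‖Complex.I * A3‖ + ‖Complex.I * A4‖ := by
            linarith [norm_sub_le A1 A2]
        _ = ‖A1‖ + ‖A2‖ + ‖A3‖ + ‖A4‖ := by
            simp [norm_mul, Complex.norm_I]
    have h4 : ‖(4 : ℂ)‖ = 4 := by norm_num
    rw [norm_div, h4, div_le_iff₀ (by norm_num : (0:ℝ) < 4)]
    calc ‖A1 - A2 + Complex.I * A3 - Complex.I * A4‖
        ≤ ‖A1‖ + ‖A2‖ + ‖A3‖ + ‖A4‖ := key
      _ ≤ 4 * C + 4 * C + 4 * C + 4 * C := by linarith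
      _ = 4 * C * 4 := by ring
  -- general bound for the form
  have hbound : ∀ v w : H, ‖B v w‖ ≤ 4 * C * ‖v‖ * ‖w‖ := by
    intro v w
    rcases eq_or_ne v 0 with rfl | hv
    · simp only [hB0, norm_zero]
      positivity
    rcases eq_or_ne w 0 with rfl | hw
    · have hBv0 : B v 0 = 0 := by simpa using hsmul₂ 0 v 0
      simp only [hBv0, norm_zero]
      positivity
    have hnv : 0 < ‖v‖ := norm_pos_iff.mpr hv
    have hnw : 0 < ‖w‖ := norm_pos_iff.mpr hw
    set a : ℂ := ((‖v‖⁻¹ : ℝ) : ℂ) with ha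
    set b : ℂ := ((‖w‖⁻¹ : ℝ) : ℂ) with hb
    have hv1 : ‖a • v‖ = 1 := by
      rw [norm_smul, ha, Complex.norm_real, Real.norm_eq_abs,
        abs_of_pos (inv_pos.mpr hnv)]
      field_simp
    have hw1 : ‖b • w‖ = 1 := by
      rw [norm_smul, hb, Complex.norm_real, Real.norm_eq_abs,
        abs_of_pos (inv_pos.mpr hnw)]
      field_simp
    have hab : B (a • v) (b • w) = a * conj b * B v w := by
      rw [hsmul₁, hsmul₂]; ring
    have hle := habs (a • v) (b • w) hv1.le hw1.le
    rw [hab] at hle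
    have hnorm : ‖a * conj b * B v w‖ = ‖v‖⁻¹ * ‖w‖⁻¹ * ‖B v w‖ := by
      rw [norm_mul, norm_mul, ha, hb, RCLike.norm_conj, Complex.norm_real,
        Complex.norm_real, Real.norm_eq_abs, Real.norm_eq_abs,
        abs_of_pos (inv_pos.mpr hnv), abs_of_pos (inv_pos.mpr hnw)]
    rw [hnorm] at hle
    have := mul_le_mul_of_nonneg_left hle (le_of_lt (mul_pos hnv hnw))
    calc ‖B v w‖ = (‖v‖ * ‖w‖) * (‖v‖⁻¹ * ‖w‖⁻¹ * ‖B v w‖) := by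
          field_simp
      _ ≤ (‖v‖ * ‖w‖) * (4 * C) := this
      _ = 4 * C * ‖v‖ * ‖w‖ := by ring
  -- the Riesz functional associated to each vector
  let φ : H → (H →L[ℂ] ℂ) := fun v =>
    LinearMap.mkContinuous
      { toFun := fun w => conj (B v w)
        map_add' := fun w w' => by simp [hadd₂]
        map_smul' := fun c w => by simp [hsmul₂] }
      (4 * C * ‖v‖)
      (fun w => by
        simp only [LinearMap.coe_mk, AddHom.coe_mk, RCLike.norm_conj]
        exact hbound v w)
  have hφ_apply : ∀ v w, φ v w = conj (B v w) := fun v w => rfl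
  let T₀ : H →ₗ[ℂ] H :=
    { toFun := fun v => (InnerProductSpace.toDual ℂ H).symm (φ v)
      map_add' := fun v v' => by
        have h1 : φ (v + v') = φ v + φ v' := by
          apply ContinuousLinearMap.ext
          intro w
          simp [hφ_apply, hadd₁]
        show (InnerProductSpace.toDual ℂ H).symm (φ (v + v'))
            = (InnerProductSpace.toDual ℂ H).symm (φ v)
              + (InnerProductSpace.toDual ℂ H).symm (φ v')
        rw [h1, map_add]
      map_smul' := fun c v => by
        have h1 : φ (c • v) = conj c • φ v := by
          apply ContinuousLinearMap.ext
          intro w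
          simp [hφ_apply, hsmul₁]
        show (InnerProductSpace.toDual ℂ H).symm (φ (c • v))
            = c • (InnerProductSpace.toDual ℂ H).symm (φ v)
        rw [h1, map_smulₛₗ]
        simp }
  have hT₀_apply : ∀ v, T₀ v = (InnerProductSpace.toDual ℂ H).symm (φ v) := fun v => rfl
  have hT₀norm : ∀ v, ‖T₀ v‖ ≤ 4 * C * ‖v‖ := by
    intro v
    rw [hT₀_apply, LinearIsometryEquiv.norm_map]
    exact LinearMap.mkContinuous_norm_le _
      (mul_nonneg (mul_nonneg (by norm_num) hCpos) (norm_nonneg v)) _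
  let T : H →L[ℂ] H := T₀.mkContinuous (4 * C) (fun v => by
    calc ‖T₀ v‖ ≤ 4 * C * ‖v‖ := hT₀norm v
      _ = 4 * C * ‖v‖ := by ring)
  have hTinner : ∀ v w, (⟪T v, w⟫_ℂ) = conj (B v w) := by
    intro v w
    have h1 : (⟪(InnerProductSpace.toDual ℂ H).symm (φ v), w⟫_ℂ) = φ v w :=
      InnerProductSpace.toDual_symm_apply
    exact h1
  have hrep : ∀ v w, B v w = ⟪w, T v⟫_ℂ := by
    intro v w
    rw [← inner_conj_symm, hTinner]
    simp
  refine ⟨T, ⟨⟨?_, ?_⟩, hrep⟩, ?_⟩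
  · intro x y
    have h1 : (⟪T x, y⟫_ℂ) = conj (B x y) := hTinner x y
    have h2 : (⟪x, T y⟫_ℂ) = B y x := (hrep y x).symm
    rw [ContinuousLinearMap.coe_coe] at *
    rw [h1, h2, hsymm]
    simp
  · intro x
    rw [ContinuousLinearMap.reApplyInnerSelf_apply, hTinner]
    simpa using hpos x
  · rintro T' ⟨-, hT'⟩
    ext v
    apply ext_inner_left ℂ
    intro w
    exact (hT' v w).symm.trans (hrep v w)
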